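/- Let μ be a probability measure on ℝ with no atoms, let ε ∈ [0,1], n ∈ ℕ with n ≥ 1, and k ∈ ℕ with k < n. For t ∈ ℝⁿ let T̂(t) be the (k+1)-st largest coordinate of t. Then the n-fold product measure μ^⊗n of the set { t ∈ ℝⁿ : μ((T̂(t), ∞)) > ε } is at most Σ_{i=0}^{k} (n choose i) ε^i (1-ε)^{n-i}. -/

import Mathlib

open MeasureTheory Set
open scoped ENNReal

/-- The `(k+1)`-st largest coordinate of `t : Fin n → ℝ`, i.e. the `(k+1)`-st entry of `t`
sorted in nonincreasing order. -/
noncomputable def kthLargest {n : ℕ} (k : ℕ) (t : Fin n → ℝ) : ℝ :=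
  (Multiset.sort (↑(List.ofFn t) : Multiset ℝ) (· ≤ ·)).getD (n - 1 - k) 0

lemma exists_tail_eq (μ : Measure ℝ) [IsProbabilityMeasure μ]
    (hatom : ∀ t : ℝ, μ {t} = 0) {ε : ℝ} (h0 : 0 < ε) (h1 : ε < 1) :
    ∃ q : ℝ, μ (Set.Ioi q) = ENNReal.ofReal ε := by
  set S : Set ℝ := {x | μ (Set.Ioi x) ≤ ENNReal.ofReal ε} with hS
  have hmono : ∀ {a b : ℝ}, a ≤ b → μ (Set.Ioi b) ≤ μ (Set.Ioi a) :=
    fun hab => measure_mono (Set.Ioi_subset_Ioi hab)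
  have hne : S.Nonempty := by
    have hinter : ⋂ m : ℕ, Set.Ioi (m : ℝ) = ∅ := by
      ext x; simp only [Set.mem_iInter, Set.mem_Ioi, Set.mem_empty_iff_false, iff_false, not_forall,
        not_lt]
      obtain ⟨m, hm⟩ := exists_nat_gt x
      exact ⟨m, hm.le⟩
    have htend : Filter.Tendsto (fun m : ℕ => μ (Set.Ioi (m : ℝ))) Filter.atTop
        (nhds (μ (⋂ m : ℕ, Set.Ioi (m : ℝ)))) :=
      tendsto_measure_iInter_atTop (fun m => (measurableSet_Ioi).nullMeasurableSet)
        (fun a b hab => Set.Ioi_subset_Ioi (by exact_mod_cast hab)) ⟨0, measure_ne_top μ _⟩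
    rw [hinter, measure_empty] at htend
    obtain ⟨m, hm⟩ := (htend.eventually_le_const
      (by simpa using h0 : (0:ℝ≥0∞) < ENNReal.ofReal ε)).exists
    exact ⟨(m : ℝ), hm⟩
  have hbdd : BddBelow S := by
    have hunion : ⋃ m : ℕ, Set.Ioi (-(m : ℝ)) = Set.univ := by
      ext x; simp only [Set.mem_iUnion, Set.mem_Ioi, Set.mem_univ, iff_true]
      obtain ⟨m, hm⟩ := exists_nat_gt (-x)
      exact ⟨m, by linarith⟩
    have hmon : Monotone fun m : ℕ => Set.Ioi (-(m : ℝ)) := fun a b hab =>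
      Set.Ioi_subset_Ioi (by simp; exact_mod_cast hab)
    have hsup : (⨆ m : ℕ, μ (Set.Ioi (-(m : ℝ)))) = 1 := by
      rw [← hmon.measure_iUnion, hunion, measure_univ]
    have : ENNReal.ofReal ε < ⨆ m : ℕ, μ (Set.Ioi (-(m : ℝ))) := by
      rw [hsup]
      exact lt_of_lt_of_le (ENNReal.ofReal_lt_one.2 h1) le_rfl
    obtain ⟨m, hm⟩ := lt_iSup_iff.mp this
    refine ⟨-(m : ℝ), fun x hx => ?_⟩
    by_contra hxm
    push_neg at hxm
    exact absurd (le_trans (hmono hxm.le) hx) (not_le.mpr hm)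
  refine ⟨sInf S, le_antisymm ?_ ?_⟩
  · -- upper bound: right continuity
    have hcover : Set.Ioi (sInf S) = ⋃ m : ℕ, Set.Ioi (sInf S + ((m : ℝ) + 1)⁻¹) := by
      ext x
      simp only [Set.mem_iUnion, Set.mem_Ioi]
      constructor
      · intro hx
        obtain ⟨m, hm⟩ := exists_nat_one_div_lt (sub_pos.mpr hx)
        rw [one_div] at hm
        exact ⟨m, by linarith⟩
      · rintro ⟨m, hm⟩
        have : (0:ℝ) < ((m:ℝ)+1)⁻¹ := by positivity
        linarith
    have hmon : Monotone fun m : ℕ => Set.Ioi (sInf S + ((m : ℝ) + 1)⁻¹) := by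
      intro a b hab
      apply Set.Ioi_subset_Ioi
      have : ((b:ℝ)+1)⁻¹ ≤ ((a:ℝ)+1)⁻¹ := by
        apply inv_anti₀ (by positivity)
        exact_mod_cast Nat.succ_le_succ hab
      linarith
    rw [hcover, hmon.measure_iUnion]
    refine iSup_le fun m => ?_
    have hlt : sInf S < sInf S + ((m : ℝ) + 1)⁻¹ := by
      have : (0:ℝ) < ((m:ℝ)+1)⁻¹ := by positivity
      linarith
    obtain ⟨y, hyS, hy⟩ := (csInf_lt_iff hbdd hne).mp hlt
    exact le_trans (hmono hy.le) hyS
  · -- lower bound: left continuity + atomless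
    have hIci : ENNReal.ofReal ε ≤ μ (Set.Ici (sInf S)) := by
      have hcover : Set.Ici (sInf S) = ⋂ m : ℕ, Set.Ioi (sInf S - ((m : ℝ) + 1)⁻¹) := by
        ext x
        simp only [Set.mem_iInter, Set.mem_Ioi, Set.mem_Ici]
        constructor
        · intro hx m
          have : (0:ℝ) < ((m:ℝ)+1)⁻¹ := by positivity
          linarith
        · intro h
          by_contra hx
          push_neg at hx
          obtain ⟨m, hm⟩ := exists_nat_one_div_lt (sub_pos.mpr hx)
          rw [one_div] at hm
          have := h m
          linarith
      have hant : Antitone fun m : ℕ => Set.Ioi (sInf S - ((m : ℝ) + 1)⁻¹) := by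
        intro a b hab
        apply Set.Ioi_subset_Ioi
        have : ((b:ℝ)+1)⁻¹ ≤ ((a:ℝ)+1)⁻¹ := by
          apply inv_anti₀ (by positivity)
          exact_mod_cast Nat.succ_le_succ hab
        linarith
      rw [hcover, hant.measure_iInter (fun m => measurableSet_Ioi.nullMeasurableSet)
        ⟨0, measure_ne_top μ _⟩]
      refine le_iInf fun m => ?_
      have hlt : sInf S - ((m : ℝ) + 1)⁻¹ < sInf S := by
        have : (0:ℝ) < ((m:ℝ)+1)⁻¹ := by positivity
        linarith
      have hnot : sInf S - ((m : ℝ) + 1)⁻¹ ∉ S := fun hmem => absurd (csInf_le hbdd hmem)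
        (not_le.mpr hlt)
      exact (not_le.mp hnot).le
    calc ENNReal.ofReal ε ≤ μ (Set.Ici (sInf S)) := hIci
      _ ≤ μ {sInf S} + μ (Set.Ioi (sInf S)) := by
          rw [show Set.Ici (sInf S) = {sInf S} ∪ Set.Ioi (sInf S) by
            ext x; simp [le_iff_lt_or_eq, or_comm, eq_comm]]
          exact measure_union_le _ _
      _ = μ (Set.Ioi (sInf S)) := by rw [hatom, zero_add]

lemma sorted_countP_le {q : ℝ} {l : List ℝ} (hs : l.Pairwise (· ≤ ·)) {n k : ℕ}
    (hlen : l.length = n) (hk : k < n) (h : l.getD (n - 1 - k) 0 < q) :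
    l.countP (fun x => decide (q < x)) ≤ k := by
  have hidx : n - 1 - k < l.length := by omega
  have hget : l.getD (n - 1 - k) 0 = l.get ⟨n - 1 - k, hidx⟩ := by
    rw [List.getD_eq_getElem l 0 hidx]; rfl
  rw [List.countP_eq_length_filter]
  have hsplit : l = l.take (n - k) ++ l.drop (n - k) := (List.take_append_drop _ _).symm
  calc (l.filter (fun x => decide (q < x))).length
      = ((l.take (n - k)).filter (fun x => decide (q < x))).length
        + ((l.drop (n - k)).filter (fun x => decide (q < x))).length := by
        conv_lhs => rw [hsplit]
        rw [List.filter_append, List.length_append]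
    _ ≤ 0 + (l.drop (n - k)).length := by
        apply Nat.add_le_add
        · apply Nat.le_zero.mpr
          rw [List.length_eq_zero_iff]
          rw [List.filter_eq_nil_iff]
          intro x hx
          simp only [decide_eq_true_eq, not_lt]
          obtain ⟨j, hj, hjx⟩ := List.mem_iff_getElem.mp hx
          have hj' : j < n - k := lt_of_lt_of_le hj
            (by rw [List.length_take]; exact min_le_left _ _)
          have hjl : j < l.length := by omega
          have hle : l.get ⟨j, hjl⟩ ≤ l.get ⟨n - 1 - k, hidx⟩ :=
            hs.rel_get_of_le (by simp; omega)
          rw [← hjx, List.getElem_take]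
          rw [hget] at h
          exact le_of_lt (lt_of_le_of_lt hle h)
        · exact List.length_filter_le _ _
    _ ≤ k := by simp [List.length_drop, hlen]; omega

lemma card_filter_eq_countP {n : ℕ} (p : ℝ → Prop) [DecidablePred p] (t : Fin n → ℝ) :
    (Finset.univ.filter fun i => p (t i)).card = (List.ofFn t).countP (fun x => decide (p x)) := by
  rw [List.ofFn_eq_map, List.countP_map]
  rw [Finset.card_def, Finset.filter_val, Fin.univ_def]
  show Multiset.card (Multiset.filter _ (↑(List.finRange n) : Multiset (Fin n))) = _
  rw [Multiset.filter_coe, Multiset.coe_card, ← List.countP_eq_length_filter]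
  rfl

lemma card_gt_le {n k : ℕ} (hk : k < n) (q : ℝ) (t : Fin n → ℝ) (h : kthLargest k t < q) :
    (Finset.univ.filter fun i => q < t i).card ≤ k := by
  set l := Multiset.sort (↑(List.ofFn t) : Multiset ℝ) (· ≤ ·) with hl
  have hsort : l.Pairwise (· ≤ ·) := Multiset.pairwise_sort _ _
  have hlen : l.length = n := by
    rw [hl]
    simp [Multiset.length_sort]
  have hperm : l.Perm (List.ofFn t) := Multiset.coe_eq_coe.mp (Multiset.sort_eq _ _)
  rw [card_filter_eq_countP (fun x => q < x) t, ← hperm.countP_eq]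
  exact sorted_countP_le hsort hlen hk h

/-- **Threshold form of Theorem 1.** For an atomless probability measure `μ` on `ℝ`, the
probability (over an i.i.d. sample `t` of size `n` from `μ`) that the upper tail above the
`(k+1)`-st largest sample value exceeds `ε` is at most the binomial tail
`∑_{i=0}^k (n choose i) ε^i (1-ε)^(n-i)`. -/
theorem threshold_pac_bound
    (μ : Measure ℝ) [IsProbabilityMeasure μ]
    (hatom : ∀ t : ℝ, μ {t} = 0)
    (ε : ℝ) (hε : ε ∈ Set.Icc (0 : ℝ) 1)
    (n k : ℕ) (hn : 1 ≤ n) (hk : k < n) :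
    (Measure.pi fun _ : Fin n => μ)
      {t : Fin n → ℝ | ENNReal.ofReal ε < μ (Set.Ioi (kthLargest k t))}
      ≤ ENNReal.ofReal (∑ i ∈ Finset.range (k + 1),
          (n.choose i : ℝ) * ε ^ i * (1 - ε) ^ (n - i)) := by
  obtain ⟨hε0, hε1⟩ := hε
  rcases eq_or_lt_of_le hε0 with hzero | hpos
  · -- ε = 0
    have hsum : (∑ i ∈ Finset.range (k + 1),
        (n.choose i : ℝ) * ε ^ i * (1 - ε) ^ (n - i)) = 1 := by
      rw [← hzero]
      rw [Finset.sum_eq_single 0]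
      · simp
      · intro b _ hb
        simp [zero_pow hb]
      · intro habs
        exact absurd (Finset.mem_range.mpr (Nat.succ_pos k)) habs
    rw [hsum, ENNReal.ofReal_one]
    exact prob_le_one
  rcases eq_or_lt_of_le hε1 with hone | hlt1
  · -- ε = 1
    have hempty : {t : Fin n → ℝ | ENNReal.ofReal ε < μ (Set.Ioi (kthLargest k t))} = ∅ := by
      ext t
      simp only [Set.mem_setOf_eq, Set.mem_empty_iff_false, iff_false, not_lt, hone,
        ENNReal.ofReal_one]
      exact prob_le_one
    rw [hempty, measure_empty]
    exact zero_le
  -- main case: 0 < ε < 1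
  obtain ⟨q, hq⟩ := exists_tail_eq μ hatom hpos hlt1
  have hIic : μ (Set.Iic q) = ENNReal.ofReal (1 - ε) := by
    have hc : Set.Iic q = (Set.Ioi q)ᶜ := by simp
    rw [hc, measure_compl measurableSet_Ioi (measure_ne_top μ _), measure_univ, hq,
      ENNReal.ofReal_sub _ hε0, ENNReal.ofReal_one]
  set box : Finset (Fin n) → Set (Fin n → ℝ) :=
    fun S => Set.pi Set.univ (fun i => if i ∈ S then Set.Ioi q else Set.Iic q) with hbox
  have hsubset : {t : Fin n → ℝ | ENNReal.ofReal ε < μ (Set.Ioi (kthLargest k t))} ⊆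
      ⋃ i ∈ Finset.range (k + 1), ⋃ S ∈ Finset.powersetCard i (Finset.univ : Finset (Fin n)),
        box S := by
    intro t ht
    simp only [Set.mem_setOf_eq] at ht
    have hkt : kthLargest k t < q := by
      by_contra hge
      push_neg at hge
      exact absurd ht (not_lt.mpr (le_of_le_of_eq (measure_mono (Set.Ioi_subset_Ioi hge)) hq))
    set S := Finset.univ.filter fun i => q < t i with hSdef
    have hcard : S.card ≤ k := card_gt_le hk q t hkt
    simp only [Set.mem_iUnion]
    refine ⟨S.card, Finset.mem_range.mpr (Nat.lt_succ_of_le hcard), S,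
      Finset.mem_powersetCard.mpr ⟨Finset.subset_univ _, rfl⟩, ?_⟩
    intro i _
    by_cases hqi : q < t i
    · simp [hSdef, hqi]
    · simp [hSdef, hqi, Set.mem_Iic, not_lt.mp hqi]
  refine le_trans (measure_mono hsubset) ?_
  refine le_trans (measure_biUnion_finset_le _ _) ?_
  have hboxmeas : ∀ S : Finset (Fin n), (Measure.pi fun _ : Fin n => μ) (box S) =
      ENNReal.ofReal ε ^ S.card * ENNReal.ofReal (1 - ε) ^ (n - S.card) := by
    intro S
    rw [hbox]
    rw [Measure.pi_pi]
    simp only [apply_ite μ, hq, hIic]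
    rw [Finset.prod_ite, Finset.prod_const, Finset.prod_const]
    congr 1
    · congr 1
      rw [Finset.filter_mem_eq_inter, Finset.univ_inter]
    · congr 1
      have := Finset.card_filter_add_card_filter_not
        (s := (Finset.univ : Finset (Fin n))) (p := fun j => j ∈ S)
      rw [Finset.filter_mem_eq_inter, Finset.univ_inter] at this
      have hcu : (Finset.univ : Finset (Fin n)).card = n := by simp
      omega
  have hterm : ∀ i ∈ Finset.range (k + 1),
      (∑ S ∈ Finset.powersetCard i (Finset.univ : Finset (Fin n)),
        (Measure.pi fun _ : Fin n => μ) (box S)) =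
      ENNReal.ofReal ((n.choose i : ℝ) * ε ^ i * (1 - ε) ^ (n - i)) := by
    intro i _
    have : ∀ S ∈ Finset.powersetCard i (Finset.univ : Finset (Fin n)),
        (Measure.pi fun _ : Fin n => μ) (box S) =
        ENNReal.ofReal ε ^ i * ENNReal.ofReal (1 - ε) ^ (n - i) := by
      intro S hS
      rw [hboxmeas S, (Finset.mem_powersetCard.mp hS).2]
    rw [Finset.sum_congr rfl this, Finset.sum_const, Finset.card_powersetCard, Finset.card_univ,
      Fintype.card_fin, nsmul_eq_mul]
    rw [← ENNReal.ofReal_pow hε0, ← ENNReal.ofReal_pow (by linarith : (0:ℝ) ≤ 1 - ε),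
      ← ENNReal.ofReal_natCast (n.choose i),
      ← ENNReal.ofReal_mul (by positivity : (0:ℝ) ≤ ε ^ i),
      ← ENNReal.ofReal_mul (Nat.cast_nonneg _)]
    congr 1
    ring
  refine le_trans (Finset.sum_le_sum fun i _ => measure_biUnion_finset_le _ _) ?_
  have hnn : ∀ i ∈ Finset.range (k + 1),
      (0:ℝ) ≤ (n.choose i : ℝ) * ε ^ i * (1 - ε) ^ (n - i) := by
    intro i _
    have h1 : (0:ℝ) ≤ 1 - ε := by linarith
    positivity
  rw [Finset.sum_congr rfl hterm, ENNReal.ofReal_sum_of_nonneg hnn]
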